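/- Let G be a finite simple graph in which every vertex has positive degree, M a set of marked vertices, and ψ : Dart(G) → ℂ a state such that (1) there is a constant a with ψ(e) = a for every dart e with e.fst ∉ M, and (2) Σ_{e : e.fst = v} ψ(e) = 0 for every v ∈ M. Then the coin-and-query part of the step fixes ψ: (C∘Q)ψ = ψ. (The coin acts as the identity on vertices where all outgoing amplitudes are equal, and as sign-negation on vertices where the outgoing amplitudes sum to zero, which cancels the sign flip of the query.) -/
import Mathlib

namespace GraphWalk

variable {V : Type*}

/-- The flip-flop shift operator `S` on the darts of a simple graph:
`(Sψ)(e) = ψ(e.symm)`. -/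
noncomputable def shift (G : SimpleGraph V) (ψ : G.Dart → ℂ) : G.Dart → ℂ :=
  fun e => ψ e.symm

/-- The Grover coin `C`:
`(Cψ)(e) = (2/deg(e.fst)) Σ_{e' : e'.fst = e.fst} ψ(e') − ψ(e)`. -/
noncomputable def coin [Fintype V] [DecidableEq V] (G : SimpleGraph V)
    [DecidableRel G.Adj] (ψ : G.Dart → ℂ) : G.Dart → ℂ :=
  fun e => (2 / (G.degree e.fst : ℂ)) *
      (∑ e' ∈ Finset.univ.filter (fun e' : G.Dart => e'.fst = e.fst), ψ e') - ψ e

/-- The query `Q`, flipping the sign of all amplitudes at marked vertices. -/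
noncomputable def query [DecidableEq V] (G : SimpleGraph V) (M : Finset V)
    (ψ : G.Dart → ℂ) : G.Dart → ℂ :=
  fun e => if e.fst ∈ M then -ψ e else ψ e

/-- One step of the search algorithm, `U' = S ∘ C ∘ Q`. -/
noncomputable def step [Fintype V] [DecidableEq V] (G : SimpleGraph V)
    [DecidableRel G.Adj] (M : Finset V) (ψ : G.Dart → ℂ) : G.Dart → ℂ :=
  shift G (coin G (query G M ψ))

/-- One step of the quantum walk without query, `U = S ∘ C`. -/
noncomputable def walk [Fintype V] [DecidableEq V] (G : SimpleGraph V)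
    [DecidableRel G.Adj] (ψ : G.Dart → ℂ) : G.Dart → ℂ :=
  shift G (coin G ψ)

end GraphWalk

/-- The coin-and-query part of the step fixes any state whose amplitudes are constant
on darts with unmarked source and sum to zero at each marked vertex: `(C ∘ Q)ψ = ψ`. -/
theorem coin_query_fixes {V : Type*} [Fintype V] [DecidableEq V]
    (G : SimpleGraph V) [DecidableRel G.Adj] (hdeg : ∀ v : V, 0 < G.degree v)
    (M : Finset V) (ψ : G.Dart → ℂ) (a : ℂ)
    (h1 : ∀ e : G.Dart, e.fst ∉ M → ψ e = a)
    (h2 : ∀ v ∈ M, ∑ e ∈ Finset.univ.filter (fun e : G.Dart => e.fst = v), ψ e = 0) :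
    GraphWalk.coin G (GraphWalk.query G M ψ) = ψ := by
  funext e
  simp only [GraphWalk.coin, GraphWalk.query]
  by_cases hm : e.fst ∈ M
  · have hsum : ∑ e' ∈ Finset.univ.filter (fun e' : G.Dart => e'.fst = e.fst),
        (if e'.fst ∈ M then -ψ e' else ψ e')
        = -∑ e' ∈ Finset.univ.filter (fun e' : G.Dart => e'.fst = e.fst), ψ e' := by
      rw [← Finset.sum_neg_distrib]
      refine Finset.sum_congr rfl fun e' he' => ?_
      rw [Finset.mem_filter] at he'
      rw [he'.2, if_pos hm]
    rw [hsum, h2 e.fst hm, neg_zero, mul_zero, if_pos hm, zero_sub, neg_neg]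
  · have hsum : ∑ e' ∈ Finset.univ.filter (fun e' : G.Dart => e'.fst = e.fst),
        (if e'.fst ∈ M then -ψ e' else ψ e') = (G.degree e.fst : ℂ) * a := by
      have hc : ∀ e' ∈ Finset.univ.filter (fun e' : G.Dart => e'.fst = e.fst),
          (if e'.fst ∈ M then -ψ e' else ψ e') = a := by
        intro e' he'
        rw [Finset.mem_filter] at he'
        rw [he'.2, if_neg hm, h1 e' (he'.2 ▸ hm)]
      rw [Finset.sum_congr rfl hc, Finset.sum_const,
        SimpleGraph.dart_fst_fiber_card_eq_degree, nsmul_eq_mul]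
    have hd : (G.degree e.fst : ℂ) ≠ 0 := by
      exact_mod_cast (hdeg e.fst).ne'
    rw [hsum, if_neg hm, h1 e hm]
    field_simp
    ring
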